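/- The map sending a finite directed graph to (the isomorphism class of) its minimal fibration base is idempotent: the minimal fibration base of the minimal fibration base B of G is isomorphic to B itself. -/

import Mathlib

/-- A finite directed multigraph: a node type, an edge type, and source/target maps. -/
structure FinDigraph where
  V : Type
  E : Type
  [finV : Finite V]
  [finE : Finite E]
  src : E → V
  tgt : E → V

attribute [instance] FinDigraph.finV FinDigraph.finE

namespace FinDigraph

/-- The far endpoint of a (reversed) path ending at `u`: the list `[e_k, …, e_1]`
represents the directed path `src e_k → ⋯ → tgt e_1 = u`. -/
def farEnd (G : FinDigraph) (u : G.V) : List G.E → G.V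
  | [] => u
  | e :: _ => G.src e

/-- `l = [e_k, …, e_1]` is a directed path of `G` ending at `u`. -/
def IsInPath (G : FinDigraph) (u : G.V) : List G.E → Prop
  | [] => True
  | e :: es => IsInPath G u es ∧ G.tgt e = G.farEnd u es

/-- The nodes of the input tree of `u`: all directed paths ending at `u`. -/
def InPath (G : FinDigraph) (u : G.V) : Type := {l : List G.E // G.IsInPath u l}

/-- The root of the input tree of `u` (the empty path). -/
def root (G : FinDigraph) (u : G.V) : G.InPath u := ⟨[], trivial⟩

/-- The parent of a path in the input tree (drop the farthest edge); the root is its own parent. -/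
def parent (G : FinDigraph) (u : G.V) : G.InPath u → G.InPath u
  | ⟨[], h⟩ => ⟨[], h⟩
  | ⟨_ :: es, h⟩ => ⟨es, h.1⟩

/-- Isomorphism of input trees: a bijection of paths preserving root, depth and parent. -/
def InTreeIso (G : FinDigraph) (u : G.V) (H : FinDigraph) (v : H.V) : Prop :=
  ∃ F : G.InPath u ≃ H.InPath v,
    F (G.root u) = H.root v ∧
    (∀ p, ((F p).1).length = (p.1).length) ∧
    (∀ p, F (G.parent u p) = H.parent v (F p))

/-- The reverse graph (all edges flipped). -/
def rev (G : FinDigraph) : FinDigraph :=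
  { V := G.V, E := G.E, src := G.tgt, tgt := G.src }

/-- Isomorphism of output trees = isomorphism of input trees in the reverse graphs. -/
def OutTreeIso (G : FinDigraph) (u : G.V) (H : FinDigraph) (v : H.V) : Prop :=
  InTreeIso (rev G) u (rev H) v

/-- A homomorphism of directed multigraphs. -/
structure Hom (G H : FinDigraph) where
  onV : G.V → H.V
  onE : G.E → H.E
  map_src : ∀ e, H.src (onE e) = onV (G.src e)
  map_tgt : ∀ e, H.tgt (onE e) = onV (G.tgt e)

/-- Isomorphism of directed multigraphs. -/
def IsIso (G H : FinDigraph) : Prop :=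
  ∃ φ : Hom G H, Function.Bijective φ.onV ∧ Function.Bijective φ.onE

/-- Fibration equivalence of nodes: isomorphic input trees. -/
def fibEquiv (G : FinDigraph) (u v : G.V) : Prop := InTreeIso G u G v

/-- Covering equivalence of nodes: isomorphic input trees and isomorphic output trees. -/
def covEquiv (G : FinDigraph) (u v : G.V) : Prop :=
  InTreeIso G u G v ∧ OutTreeIso G u G v

/-- Orbit equivalence: some automorphism maps one node to the other. -/
def orbitEquiv (G : FinDigraph) (u v : G.V) : Prop :=
  ∃ φ : Hom G G, Function.Bijective φ.onV ∧ Function.Bijective φ.onE ∧ φ.onV u = v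

theorem inTreeIso_refl (G : FinDigraph) (u : G.V) : InTreeIso G u G u :=
  ⟨Equiv.refl _, rfl, fun _ => rfl, fun _ => rfl⟩

theorem inTreeIso_symm {G : FinDigraph} {u : G.V} {H : FinDigraph} {v : H.V}
    (h : InTreeIso G u H v) : InTreeIso H v G u := by
  obtain ⟨F, hroot, hlen, hpar⟩ := h
  refine ⟨F.symm, ?_, ?_, ?_⟩
  · rw [← hroot, Equiv.symm_apply_apply]
  · intro p; rw [← hlen (F.symm p), Equiv.apply_symm_apply]
  · intro p
    apply F.injective
    rw [Equiv.apply_symm_apply, hpar (F.symm p), Equiv.apply_symm_apply]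

theorem inTreeIso_trans {G : FinDigraph} {u : G.V} {H : FinDigraph} {v : H.V}
    {K : FinDigraph} {w : K.V}
    (h₁ : InTreeIso G u H v) (h₂ : InTreeIso H v K w) : InTreeIso G u K w := by
  obtain ⟨F, fr, fl, fp⟩ := h₁
  obtain ⟨F', gr, gl, gp⟩ := h₂
  refine ⟨F.trans F', ?_, ?_, ?_⟩
  · simp [Equiv.trans_apply, fr, gr]
  · intro p; simp [Equiv.trans_apply, gl, fl]
  · intro p; simp [Equiv.trans_apply, fp, gp]

/-- The setoid of fibration equivalence (isomorphism of input trees). -/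
def fibSetoid (G : FinDigraph) : Setoid G.V :=
  ⟨fibEquiv G, ⟨fun u => inTreeIso_refl G u, inTreeIso_symm, inTreeIso_trans⟩⟩

/-- The minimal fibration base of `G`: nodes are the fibers (input-tree isomorphism
classes), and the edges from a fiber `C'` into a fiber `C` are the edges of `G` from
nodes of `C'` into the chosen representative of `C`. -/
def base (G : FinDigraph) : FinDigraph where
  V := Quotient (fibSetoid G)
  E := {e : G.E // G.tgt e = (Quotient.mk (fibSetoid G) (G.tgt e)).out}
  src e := Quotient.mk (fibSetoid G) (G.src e.1)
  tgt e := Quotient.mk (fibSetoid G) (G.tgt e.1)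

/-- The fiber of a node, as a node of the minimal base. -/
def fibClass (G : FinDigraph) (u : G.V) : (base G).V := Quotient.mk (fibSetoid G) u

/-- A partition (given as an equivalence relation) is balanced if any two equivalent
nodes receive the same number of edges from each class. -/
def IsBalanced (G : FinDigraph) (r : G.V → G.V → Prop) : Prop :=
  Equivalence r ∧ ∀ u v, r u v → ∀ w : G.V,
    Nat.card {e : G.E // G.tgt e = u ∧ r (G.src e) w} =
    Nat.card {e : G.E // G.tgt e = v ∧ r (G.src e) w}

/-- The multiset of states of the in-neighbors of `u` (with edge multiplicity). -/
noncomputable def inStates (G : FinDigraph) {S : Type} (x : G.V → S) (u : G.V) :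
    Multiset S :=
  letI := Fintype.ofFinite G.E
  letI := Classical.decEq G.V
  (Finset.univ.filter (fun e => G.tgt e = u)).val.map fun e => x (G.src e)

end FinDigraph
namespace FinDigraph

variable {G H : FinDigraph}

theorem parent_val (u : G.V) (p : G.InPath u) : (G.parent u p).1 = p.1.tail := by
  obtain ⟨l, h⟩ := p; cases l <;> rfl

theorem parent_iter (u : G.V) (p : G.InPath u) (n : ℕ) :
    ((G.parent u)^[n] p).1 = p.1.drop n := by
  induction n generalizing p with
  | zero => rfl
  | succ n ih =>
    rw [Function.iterate_succ_apply, ih, parent_val, List.drop_tail]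

theorem farEnd_append (u : G.V) (e : G.E) (l : List G.E) :
    G.farEnd u (l ++ [e]) = G.farEnd (G.src e) l := by cases l <;> rfl

theorem isInPath_append {u : G.V} {e : G.E} (he : G.tgt e = u) (l : List G.E) :
    G.IsInPath u (l ++ [e]) ↔ G.IsInPath (G.src e) l := by
  induction l with
  | nil => simp [IsInPath, farEnd, he]
  | cons a l ih => simp [IsInPath, ih, farEnd_append]

section LocalToGlobal

variable {R : G.V → H.V → Prop}
variable (β : ∀ u v, R u v → ({e : G.E // G.tgt e = u} ≃ {f : H.E // H.tgt f = v}))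
variable (hβ : ∀ u v (h : R u v) e, R (G.src e.1) (H.src (β u v h e).1))

def lift (u : G.V) (v : H.V) (huv : R u v) :
    (l : List G.E) → G.IsInPath u l →
      {m : List H.E // H.IsInPath v m ∧ m.length = l.length ∧
        R (G.farEnd u l) (H.farEnd v m)}
  | [], _ => ⟨[], trivial, rfl, huv⟩
  | e :: es, h =>
    let prev := lift u v huv es h.1
    let f := β (G.farEnd u es) (H.farEnd v prev.1) prev.2.2.2 ⟨e, h.2⟩
    ⟨f.1 :: prev.1, ⟨prev.2.1, f.2⟩, by simpa using prev.2.2.1,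
      hβ (G.farEnd u es) (H.farEnd v prev.1) prev.2.2.2 ⟨e, h.2⟩⟩

theorem lift_injective (u : G.V) (v : H.V) (huv : R u v) :
    ∀ (l₁ : List G.E) (h₁ : G.IsInPath u l₁) (l₂ : List G.E) (h₂ : G.IsInPath u l₂),
      (lift β hβ u v huv l₁ h₁).1 = (lift β hβ u v huv l₂ h₂).1 → l₁ = l₂ := by
  intro l₁
  induction l₁ with
  | nil =>
    intro h₁ l₂ h₂ heq
    cases l₂ with
    | nil => rfl
    | cons e es => simp [lift] at heq
  | cons e es ih =>
    intro h₁ l₂ h₂ heq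
    cases l₂ with
    | nil => simp [lift] at heq
    | cons e' es' =>
      simp only [lift, List.cons.injEq] at heq
      obtain ⟨hhd, htl⟩ := heq
      have hes : es = es' := ih h₁.1 es' h₂.1 htl
      subst hes
      have : e = e' := by
        have := (β (G.farEnd u es) (H.farEnd v (lift β hβ u v huv es h₁.1).1)
          (lift β hβ u v huv es h₁.1).2.2.2).injective
          (a₁ := ⟨e, h₁.2⟩) (a₂ := ⟨e', h₂.2⟩) (Subtype.ext hhd)
        exact congrArg Subtype.val this
      rw [this]

theorem lift_surjective (u : G.V) (v : H.V) (huv : R u v) :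
    ∀ (m : List H.E), H.IsInPath v m → ∃ l hl, (lift β hβ u v huv l hl).1 = m := by
  intro m
  induction m with
  | nil => exact fun _ => ⟨[], trivial, rfl⟩
  | cons f fs ih =>
    intro hm
    obtain ⟨es, hes, hlift⟩ := ih hm.1
    have hf' : H.tgt f = H.farEnd v (lift β hβ u v huv es hes).1 := by
      rw [hlift]; exact hm.2
    set p := (lift β hβ u v huv es hes).2.2.2
    set e := (β _ _ p).symm ⟨f, hf'⟩ with he
    refine ⟨e.1 :: es, ⟨hes, e.2⟩, ?_⟩
    simp only [lift, List.cons.injEq]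
    refine ⟨?_, hlift⟩
    show (β _ _ _ ⟨e.1, e.2⟩).1 = f
    have h2 : (⟨e.1, e.2⟩ : {e : G.E // G.tgt e = G.farEnd u es}) = e := rfl
    rw [h2, he, Equiv.apply_symm_apply]

include β hβ in
theorem localToGlobal (u : G.V) (v : H.V) (huv : R u v) : InTreeIso G u H v := by
  have hFbij : Function.Bijective
      (fun p : G.InPath u => (⟨(lift β hβ u v huv p.1 p.2).1,
        (lift β hβ u v huv p.1 p.2).2.1⟩ : H.InPath v)) := by
    constructor
    · intro p q hpq
      exact Subtype.ext (lift_injective β hβ u v huv p.1 p.2 q.1 q.2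
        (congrArg Subtype.val hpq))
    · intro m
      obtain ⟨l, hl, hlift⟩ := lift_surjective β hβ u v huv m.1 m.2
      exact ⟨⟨l, hl⟩, Subtype.ext hlift⟩
  refine ⟨Equiv.ofBijective _ hFbij, ?_, ?_, ?_⟩
  · rfl
  · intro p
    exact (lift β hβ u v huv p.1 p.2).2.2.1
  · intro p
    obtain ⟨l, h⟩ := p
    cases l with
    | nil => rfl
    | cons e es => rfl

end LocalToGlobal

end FinDigraph
namespace FinDigraph

variable {G H : FinDigraph}

theorem exists_single {v : H.V} (q : H.InPath v) (hq : q.1.length = 1) :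
    ∃ f : {f : H.E // H.tgt f = v}, q.1 = [f.1] := by
  obtain ⟨l, hl⟩ := q
  match l, hl, hq with
  | [f], hl, _ => exact ⟨⟨f, hl.2⟩, rfl⟩
  | [], _, hq => simp at hq
  | _ :: _ :: _, _, hq => simp at hq

theorem subtree_iso {u : G.V} {v : H.V}
    (F : G.InPath u ≃ H.InPath v)
    (hlen : ∀ p, ((F p).1).length = p.1.length)
    (hpar : ∀ p, F (G.parent u p) = H.parent v (F p))
    {e : G.E} (he : G.tgt e = u) {f : H.E} (hf : H.tgt f = v)
    (hef : F ⟨[e], ⟨trivial, he⟩⟩ = ⟨[f], ⟨trivial, hf⟩⟩) :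
    InTreeIso G (G.src e) H (H.src f) := by
  have hlen' : ∀ q, ((F.symm q).1).length = q.1.length := fun q => by
    rw [← hlen (F.symm q), Equiv.apply_symm_apply]
  have hpariter : ∀ n p, F ((G.parent u)^[n] p) = (H.parent v)^[n] (F p) := by
    intro n
    induction n with
    | zero => intro p; rfl
    | succ n ih =>
      intro p
      rw [Function.iterate_succ_apply', Function.iterate_succ_apply', ← ih, hpar]
  have hpariter' : ∀ n q, F.symm ((H.parent v)^[n] q) = (G.parent u)^[n] (F.symm q) := by
    intro n q
    apply F.injective
    rw [Equiv.apply_symm_apply, hpariter, Equiv.apply_symm_apply]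
  have hef' : F.symm ⟨[f], ⟨trivial, hf⟩⟩ = ⟨[e], ⟨trivial, he⟩⟩ := by
    rw [← hef]; exact F.symm_apply_apply _
  -- the raw forward map
  let Φraw : G.InPath (G.src e) → H.InPath v :=
    fun l => F ⟨l.1 ++ [e], (isInPath_append he l.1).2 l.2⟩
  have key1 : ∀ l, (Φraw l).1.drop l.1.length = [f] := by
    intro l
    have h1 : (G.parent u)^[l.1.length] ⟨l.1 ++ [e], (isInPath_append he l.1).2 l.2⟩
        = (⟨[e], ⟨trivial, he⟩⟩ : G.InPath u) := by
      apply Subtype.ext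
      refine (parent_iter u _ _).trans ?_
      simpa using List.drop_left l.1 [e]
    calc (Φraw l).1.drop l.1.length
        = (((H.parent v)^[l.1.length]) (Φraw l)).1 := (parent_iter v _ _).symm
      _ = (F ((G.parent u)^[l.1.length] ⟨l.1 ++ [e], _⟩)).1 := congrArg Subtype.val (hpariter _ _).symm
      _ = [f] := by rw [h1, hef]
  have key2 : ∀ l, (Φraw l).1.length = l.1.length + 1 := by
    intro l
    exact (hlen _).trans (by simp)
  have key3 : ∀ l, (Φraw l).1.take l.1.length ++ [f] = (Φraw l).1 := by
    intro l
    conv_rhs => rw [← List.take_append_drop l.1.length (Φraw l).1]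
    rw [key1]
  -- the forward map
  let Φ : G.InPath (G.src e) → H.InPath (H.src f) := fun l =>
    ⟨(Φraw l).1.take l.1.length, by
      have := (Φraw l).2
      rw [← key3 l] at this
      exact (isInPath_append hf _).1 this⟩
  have hΦlen : ∀ l, (Φ l).1.length = l.1.length := by
    intro l
    show ((Φraw l).1.take l.1.length).length = _
    rw [List.length_take, key2, Nat.min_eq_left (Nat.le_succ _)]
  have hbij : Function.Bijective Φ := by
    constructor
    · intro l₁ l₂ h12
      have hl : l₁.1.length = l₂.1.length := by
        rw [← hΦlen l₁, ← hΦlen l₂, h12]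
      have hraw : Φraw l₁ = Φraw l₂ := by
        apply Subtype.ext
        rw [← key3 l₁, ← key3 l₂]
        have : (Φ l₁).1 = (Φ l₂).1 := by rw [h12]
        rw [show (Φraw l₁).1.take l₁.1.length = (Φ l₁).1 from rfl,
          show (Φraw l₂).1.take l₂.1.length = (Φ l₂).1 from rfl, this]
      have := F.injective hraw
      have := congrArg Subtype.val this
      simp only [List.append_left_inj] at this
      exact Subtype.ext (by simpa using this)
    · intro m
      set qm : H.InPath v := ⟨m.1 ++ [f], (isInPath_append hf m.1).2 m.2⟩ with hqm
      set Q := F.symm qm with hQdef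
      have hQlen : Q.1.length = m.1.length + 1 := by
        rw [hlen']
        simp [hqm]
      have hQdrop : Q.1.drop m.1.length = [e] := by
        have h1 : (H.parent v)^[m.1.length] qm = (⟨[f], ⟨trivial, hf⟩⟩ : H.InPath v) := by
          apply Subtype.ext
          rw [parent_iter]
          simpa [hqm] using List.drop_left m.1 [f]
        calc Q.1.drop m.1.length = (((G.parent u)^[m.1.length]) Q).1 :=
              (parent_iter u _ _).symm
          _ = (F.symm ((H.parent v)^[m.1.length] qm)).1 := by rw [hpariter']
          _ = [e] := by rw [h1, hef']
      have hla : Q.1.take m.1.length ++ [e] = Q.1 := by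
        conv_rhs => rw [← List.take_append_drop m.1.length Q.1]
        rw [hQdrop]
      have hlQ : G.IsInPath (G.src e) (Q.1.take m.1.length) := by
        have := Q.2
        rw [← hla] at this
        exact (isInPath_append he _).1 this
      refine ⟨⟨Q.1.take m.1.length, hlQ⟩, ?_⟩
      have hlenl : (Q.1.take m.1.length).length = m.1.length := by
        rw [List.length_take, hQlen, Nat.min_eq_left (Nat.le_succ _)]
      have hrawQ : Φraw ⟨Q.1.take m.1.length, hlQ⟩ = qm := by
        show F ⟨Q.1.take m.1.length ++ [e], _⟩ = qm
        rw [show (⟨Q.1.take m.1.length ++ [e], _⟩ : G.InPath u) = Q from Subtype.ext hla,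
          hQdef, Equiv.apply_symm_apply]
      apply Subtype.ext
      show (Φraw ⟨Q.1.take m.1.length, hlQ⟩).1.take _ = m.1
      rw [hrawQ]
      show qm.1.take (Q.1.take m.1.length).length = m.1
      rw [hlenl, hqm]
      exact List.take_left
  refine ⟨Equiv.ofBijective Φ hbij, ?_, hΦlen, ?_⟩
  · apply Subtype.ext
    show (Φraw (G.root (G.src e))).1.take 0 = []
    simp
  · intro l
    apply Subtype.ext
    obtain ⟨ll, hll⟩ := l
    cases ll with
    | nil =>
      show (Φ (G.parent _ ⟨[], hll⟩)).1 = (H.parent _ (Φ ⟨[], hll⟩)).1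
      rw [parent_val]
      show List.take 0 (Φraw ⟨[], hll⟩).1 = (List.take 0 (Φraw ⟨[], hll⟩).1).tail
      simp
    | cons a as =>
      show (Φ ⟨as, hll.1⟩).1 = (H.parent _ (Φ ⟨a :: as, hll⟩)).1
      rw [parent_val]
      show (Φraw ⟨as, hll.1⟩).1.take as.length
        = ((Φraw ⟨a :: as, hll⟩).1.take (a :: as).length).tail
      have hstep : Φraw ⟨as, hll.1⟩ = H.parent v (Φraw ⟨a :: as, hll⟩) := by
        have := hpar ⟨(a :: as) ++ [e], (isInPath_append he _).2 hll⟩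
        exact (congrArg F (Subtype.ext rfl)).trans this
      rw [hstep]
      rw [parent_val]
      show List.take as.length (Φraw ⟨a :: as, hll⟩).1.tail
        = (List.take (as.length + 1) (Φraw ⟨a :: as, hll⟩).1).tail
      generalize (Φraw ⟨a :: as, hll⟩).1 = X
      rcases X with _ | ⟨b, X⟩ <;> simp

end FinDigraph
namespace FinDigraph

variable {G H : FinDigraph}

theorem globalToLocal {u : G.V} {v : H.V} (h : InTreeIso G u H v) :
    ∃ b : {e : G.E // G.tgt e = u} ≃ {f : H.E // H.tgt f = v},
      ∀ e, InTreeIso G (G.src e.1) H (H.src (b e).1) := by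
  classical
  obtain ⟨F, hroot, hlen, hpar⟩ := h
  have hlen' : ∀ q, ((F.symm q).1).length = q.1.length := fun q => by
    rw [← hlen (F.symm q), Equiv.apply_symm_apply]
  let pG : {e : G.E // G.tgt e = u} → G.InPath u := fun e => ⟨[e.1], ⟨trivial, e.2⟩⟩
  let pH : {f : H.E // H.tgt f = v} → H.InPath v := fun f => ⟨[f.1], ⟨trivial, f.2⟩⟩
  have hFlen1 : ∀ e, ((F (pG e)).1).length = 1 := fun e => hlen _
  have hFlen1' : ∀ f, ((F.symm (pH f)).1).length = 1 := fun f => hlen' _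
  let bf : {e : G.E // G.tgt e = u} → {f : H.E // H.tgt f = v} :=
    fun e => Classical.choose (exists_single _ (hFlen1 e))
  let bg : {f : H.E // H.tgt f = v} → {e : G.E // G.tgt e = u} :=
    fun f => Classical.choose (exists_single _ (hFlen1' f))
  have hbf : ∀ e, F (pG e) = pH (bf e) := fun e =>
    Subtype.ext (Classical.choose_spec (exists_single _ (hFlen1 e)))
  have hbg : ∀ f, F.symm (pH f) = pG (bg f) := fun f =>
    Subtype.ext (Classical.choose_spec (exists_single _ (hFlen1' f)))
  have hinj : Function.Injective pG := by
    intro a b hab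
    have := congrArg Subtype.val hab
    simp only [pG, List.cons.injEq] at this
    exact Subtype.ext this.1
  have hinj' : Function.Injective pH := by
    intro a b hab
    have := congrArg Subtype.val hab
    simp only [pH, List.cons.injEq] at this
    exact Subtype.ext this.1
  have left : ∀ e, bg (bf e) = e := fun e => hinj (by
    rw [← hbg (bf e), ← hbf e, Equiv.symm_apply_apply])
  have right : ∀ f, bf (bg f) = f := fun f => hinj' (by
    rw [← hbf (bg f), ← hbg f, Equiv.apply_symm_apply])
  refine ⟨⟨bf, bg, left, right⟩, ?_⟩
  intro e
  exact subtree_iso F hlen hpar e.2 (bf e).2 (hbf e)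

/-- Edges of `G` into the representative of a class `C`, vs edges of `base G` into `C`. -/
def baseEdgeEquiv (G : FinDigraph) (C : (base G).V) :
    {e : G.E // G.tgt e = C.out} ≃ {f : (base G).E // (base G).tgt f = C} where
  toFun e := ⟨⟨e.1, by rw [e.2]; exact congrArg Quotient.out (Quotient.out_eq (s := fibSetoid G) C).symm⟩, by
    show Quotient.mk (fibSetoid G) (G.tgt e.1) = C
    rw [e.2]; exact Quotient.out_eq (s := fibSetoid G) C⟩
  invFun f := ⟨f.1.1, by
    have h1 : G.tgt f.1.1 = (Quotient.mk (fibSetoid G) (G.tgt f.1.1)).out := f.1.2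
    have h2 : Quotient.mk (fibSetoid G) (G.tgt f.1.1) = C := f.2
    rw [h1, h2]⟩
  left_inv e := rfl
  right_inv f := Subtype.ext (Subtype.ext rfl)

theorem inTreeIso_base (G : FinDigraph) (u : G.V) :
    InTreeIso G u (base G) (fibClass G u) := by
  classical
  have hx : ∀ (x : G.V) (C : (base G).V), fibClass G x = C → fibEquiv G x C.out := by
    intro x C h
    refine Quotient.exact (s := fibSetoid G) ?_
    show Quotient.mk (fibSetoid G) x = Quotient.mk (fibSetoid G) C.out
    rw [show Quotient.mk (fibSetoid G) C.out = C from Quotient.out_eq C]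
    exact h
  let B : ∀ (x : G.V) (C : (base G).V), fibClass G x = C →
      ({e : G.E // G.tgt e = x} ≃ {f : (base G).E // (base G).tgt f = C}) :=
    fun x C h => (Classical.choose (globalToLocal (hx x C h))).trans (baseEdgeEquiv G C)
  have hB : ∀ (x : G.V) (C : (base G).V) (h : fibClass G x = C) e,
      fibClass G (G.src e.1) = (base G).src ((B x C h) e).1 := by
    intro x C h e
    have := Classical.choose_spec (globalToLocal (hx x C h)) e
    show Quotient.mk (fibSetoid G) (G.src e.1) = Quotient.mk (fibSetoid G) _
    exact Quotient.sound (s := fibSetoid G) this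
  exact localToGlobal B hB u (fibClass G u) rfl

theorem base_classes_trivial (G : FinDigraph) (C C' : (base G).V)
    (h : fibEquiv (base G) C C') : C = C' := by
  have h1 := inTreeIso_base G C.out
  have h2 := inTreeIso_base G C'.out
  rw [show fibClass G C.out = C from Quotient.out_eq C] at h1
  rw [show fibClass G C'.out = C' from Quotient.out_eq C'] at h2
  have h3 : InTreeIso G C.out G C'.out :=
    inTreeIso_trans (inTreeIso_trans h1 h) (inTreeIso_symm h2)
  rw [← Quotient.out_eq (s := fibSetoid G) C, ← Quotient.out_eq (s := fibSetoid G) C']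
  exact Quotient.sound (s := fibSetoid G) h3

end FinDigraph
/-- taking the minimal fibration base is idempotent: the minimal
fibration base of the minimal fibration base of `G` is isomorphic to the base itself. -/
theorem base_idempotent (G : FinDigraph) :
    FinDigraph.IsIso (FinDigraph.base (FinDigraph.base G)) (FinDigraph.base G) := by

  classical
  set B := FinDigraph.base G with hB
  have key := FinDigraph.base_classes_trivial G
  refine ⟨{ onV := Quotient.lift id (fun a b h => key a b h)
            onE := fun f => f.1
            map_src := fun f => rfl
            map_tgt := fun f => rfl }, ?_, ?_⟩
  · constructor
    · intro a b hab
      obtain ⟨a, rfl⟩ : ∃ x, Quotient.mk (FinDigraph.fibSetoid B) x = a :=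
        ⟨a.out, Quotient.out_eq a⟩
      obtain ⟨b, rfl⟩ : ∃ x, Quotient.mk (FinDigraph.fibSetoid B) x = b :=
        ⟨b.out, Quotient.out_eq b⟩
      simp only [Quotient.lift_mk, id_eq] at hab
      exact congrArg _ hab
    · intro C
      exact ⟨Quotient.mk _ C, rfl⟩
  · constructor
    · intro a b hab
      exact Subtype.ext hab
    · intro e
      have hcond : B.tgt e =
          (Quotient.mk (FinDigraph.fibSetoid B) (B.tgt e)).out := by
        refine (key _ _ ?_).symm
        exact Quotient.mk_out (s := FinDigraph.fibSetoid B) (B.tgt e)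
      exact ⟨⟨e, hcond⟩, rfl⟩
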